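/- Let X be a finite set of k ≥ 1 points in ℝⁿ and for each p ∈ X set v_p := (1, p₁, …, p_n) ∈ ℝ^{n+1}. Let I(X) ⊆ ℝ[X₀,…,X_n] be the ideal generated by all homogeneous polynomials F with F(v_p) = 0 for every p ∈ X, and let i(X) be the least integer t such that the evaluation map from homogeneous polynomials of degree t to ℝ^X, F ↦ (F(v_p))_{p∈X}, is surjective. Then I(X) is generated by its homogeneous elements of degree at most α(X) := i(X) + 1. -/

import Mathlib

noncomputable section

/-- The point `[1 : p₁ : ⋯ : pₙ]` of projective `n`-space, as a vector in `ℝ^{n+1}`. -/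
def projPt {n : ℕ} (p : Fin n → ℝ) : Fin (n + 1) → ℝ := Fin.cons 1 p

open MvPolynomial in
/-- Every homogeneous polynomial of positive degree `t+1` can be written as
`∑ j, X j * G j` with each `G j` homogeneous of degree `t`. -/
lemma exists_homog_decomp {n t : ℕ} {F : MvPolynomial (Fin (n + 1)) ℝ}
    (hF : F.IsHomogeneous (t + 1)) :
    ∃ G : Fin (n + 1) → MvPolynomial (Fin (n + 1)) ℝ,
      (∀ j, (G j).IsHomogeneous t) ∧ F = ∑ j, X j * G j := by
  classical
  set pick : (Fin (n + 1) →₀ ℕ) → Fin (n + 1) :=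
    fun m => if h : m.support.Nonempty then m.support.min' h else 0 with hpick
  have hpickmem : ∀ m ∈ F.support, (m (pick m)) ≠ 0 := by
    intro m hm
    have hm0 : m ≠ 0 := by
      intro h
      have := hF (MvPolynomial.mem_support_iff.mp hm)
      rw [h] at this
      simp at this
    have hne : m.support.Nonempty := Finsupp.support_nonempty_iff.mpr hm0
    have : pick m ∈ m.support := by
      simp only [hpick, dif_pos hne]
      exact m.support.min'_mem hne
    exact Finsupp.mem_support_iff.mp this
  have hle : ∀ m ∈ F.support, Finsupp.single (pick m) 1 ≤ m := fun m hm =>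
    Finsupp.single_le_iff.mpr (Nat.one_le_iff_ne_zero.mpr (hpickmem m hm))
  have hterm : ∀ m ∈ F.support,
      X (pick m) * monomial (m - Finsupp.single (pick m) 1) (coeff m F)
        = monomial m (coeff m F) := by
    intro m hm
    have hadd : Finsupp.single (pick m) 1 + (m - Finsupp.single (pick m) 1) = m :=
      add_tsub_cancel_of_le (hle m hm)
    calc X (pick m) * monomial (m - Finsupp.single (pick m) 1) (coeff m F)
        = monomial (Finsupp.single (pick m) 1 + (m - Finsupp.single (pick m) 1)) (coeff m F) := by
          rw [monomial_single_add, pow_one]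
      _ = monomial m (coeff m F) := by rw [hadd]
  refine ⟨fun j => ∑ m ∈ F.support.filter (fun m => pick m = j),
      monomial (m - Finsupp.single (pick m) 1) (coeff m F), ?_, ?_⟩
  · intro j
    apply MvPolynomial.IsHomogeneous.sum
    intro m hm
    rw [Finset.mem_filter] at hm
    apply isHomogeneous_monomial
    have hadd : (m - Finsupp.single (pick m) 1) + Finsupp.single (pick m) 1 = m :=
      tsub_add_cancel_of_le (hle m hm.1)
    have hdeg : (m - Finsupp.single (pick m) 1).degree + (Finsupp.single (pick m) 1).degree
        = m.degree := by
      conv_rhs => rw [← hadd]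
      simp only [Finsupp.degree_eq_weight_one, map_add]
    have hdegm : m.degree = t + 1 := by
      rw [Finsupp.degree_eq_weight_one]
      exact hF (MvPolynomial.mem_support_iff.mp hm.1)
    have hone : (Finsupp.single (pick m) 1).degree = 1 := by
      exact Finsupp.degree_single _ _
    omega
  · calc F = ∑ m ∈ F.support, monomial m (coeff m F) :=
          (MvPolynomial.support_sum_monomial_coeff F).symm
      _ = ∑ j, ∑ m ∈ F.support.filter (fun m => pick m = j), monomial m (coeff m F) :=
          (Finset.sum_fiberwise_of_maps_to (fun m _ => Finset.mem_univ _) _).symm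
      _ = ∑ j, X j * ∑ m ∈ F.support.filter (fun m => pick m = j),
            monomial (m - Finsupp.single (pick m) 1) (coeff m F) := by
          refine Finset.sum_congr rfl fun j _ => ?_
          rw [Finset.mul_sum]
          refine Finset.sum_congr rfl fun m hm => ?_
          rw [Finset.mem_filter] at hm
          rw [← hm.2]
          exact (hterm m hm.1).symm

theorem vanishing_ideal_generated_in_degree_interpolation_plus_one {n : ℕ}
    (X : Finset (Fin n → ℝ)) (hX : X.Nonempty) (iX : ℕ)
    (hsurj : ∀ v : {x // x ∈ X} → ℝ, ∃ F : MvPolynomial (Fin (n + 1)) ℝ,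
      F.IsHomogeneous iX ∧
        ∀ p : {x // x ∈ X}, MvPolynomial.eval (projPt (p : Fin n → ℝ)) F = v p)
    (hleast : ∀ t : ℕ, (∀ v : {x // x ∈ X} → ℝ, ∃ F : MvPolynomial (Fin (n + 1)) ℝ,
      F.IsHomogeneous t ∧
        ∀ p : {x // x ∈ X}, MvPolynomial.eval (projPt (p : Fin n → ℝ)) F = v p) → iX ≤ t) :
    Ideal.span {F : MvPolynomial (Fin (n + 1)) ℝ |
        (∃ t, F.IsHomogeneous t) ∧ ∀ p ∈ X, MvPolynomial.eval (projPt p) F = 0} =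
    Ideal.span {F : MvPolynomial (Fin (n + 1)) ℝ |
        (∃ t ≤ iX + 1, F.IsHomogeneous t) ∧ ∀ p ∈ X, MvPolynomial.eval (projPt p) F = 0} := by
  classical
  set S : Set (MvPolynomial (Fin (n + 1)) ℝ) :=
    {F | (∃ t ≤ iX + 1, F.IsHomogeneous t) ∧ ∀ p ∈ X, MvPolynomial.eval (projPt p) F = 0}
    with hS
  set J := Ideal.span S with hJ
  have hproj0 : ∀ p : Fin n → ℝ, projPt p 0 = 1 := fun p => rfl
  have key : ∀ t, ∀ F : MvPolynomial (Fin (n + 1)) ℝ, F.IsHomogeneous t →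
      (∀ p ∈ X, MvPolynomial.eval (projPt p) F = 0) → F ∈ J := by
    intro t
    induction t using Nat.strong_induction_on with
    | _ t ih =>
      intro F hF hvan
      by_cases hle : t ≤ iX + 1
      · exact Ideal.subset_span ⟨⟨t, hle, hF⟩, hvan⟩
      · obtain ⟨s, rfl⟩ : ∃ s, t = s + 1 := ⟨t - 1, by omega⟩
        obtain ⟨G, hGh, hFeq⟩ := exists_homog_decomp hF
        choose K hKh hKe using fun j =>
          hsurj (fun p => MvPolynomial.eval (projPt (p : Fin n → ℝ)) (G j))
        set m := s - iX with hm
        set W : MvPolynomial (Fin (n + 1)) ℝ := ∑ j, MvPolynomial.X j * K j with hW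
        have hWh : W.IsHomogeneous (iX + 1) := by
          apply MvPolynomial.IsHomogeneous.sum
          intro j _
          simpa [add_comm] using (MvPolynomial.isHomogeneous_X ℝ j).mul (hKh j)
        have hWv : ∀ p ∈ X, MvPolynomial.eval (projPt p) W = 0 := by
          intro p hp
          have h1 : MvPolynomial.eval (projPt p) W
              = ∑ j, projPt p j * MvPolynomial.eval (projPt p) (G j) := by
            simp only [hW, map_sum, map_mul, MvPolynomial.eval_X]
            exact Finset.sum_congr rfl fun j _ => by rw [hKe j ⟨p, hp⟩]
          rw [h1]
          have h2 := hvan p hp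
          rw [hFeq] at h2
          simpa [map_sum, map_mul, MvPolynomial.eval_X] using h2
        have hWJ : W ∈ J := Ideal.subset_span ⟨⟨iX + 1, le_refl _, hWh⟩, hWv⟩
        have hGJ : ∀ j, G j - MvPolynomial.X 0 ^ m * K j ∈ J := by
          intro j
          apply ih s (by omega)
          · apply (hGh j).sub
            have hsm : s = m + iX := by omega
            rw [hsm]
            exact (MvPolynomial.isHomogeneous_X_pow 0 m).mul (hKh j)
          · intro p hp
            simp only [map_sub, map_mul, map_pow, MvPolynomial.eval_X, hproj0, one_pow, one_mul]
            rw [hKe j ⟨p, hp⟩]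
            ring
        have hfinal : F = (∑ j, MvPolynomial.X j * (G j - MvPolynomial.X 0 ^ m * K j))
            + MvPolynomial.X 0 ^ m * W := by
          rw [hFeq, hW, Finset.mul_sum, ← Finset.sum_add_distrib]
          exact Finset.sum_congr rfl fun j _ => by ring
        rw [hfinal]
        exact add_mem (Ideal.sum_mem J fun j _ => Ideal.mul_mem_left J _ (hGJ j))
          (Ideal.mul_mem_left J _ hWJ)
  apply le_antisymm
  · rw [Ideal.span_le]
    rintro F ⟨⟨t, hFt⟩, hvan⟩
    exact key t F hFt hvan
  · apply Ideal.span_mono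
    rintro F ⟨⟨t, _, hFt⟩, hv⟩
    exact ⟨⟨t, hFt⟩, hv⟩
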